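/- Let n ≥ 7 be a positive integer, let (Q,·) be a quasigroup of order n, and let i ∈ {1,2,3}. Then Atp_i(Q) is neither the full symmetric group on Q nor the alternating group on Q. -/
import Mathlib


open scoped Classical

noncomputable section

/-- If every power of a permutation that has a fixed point is the identity,
then its order divides the cardinality of the underlying type. -/
theorem semiregular_orderOf_dvd_card {Q : Type*} [Fintype Q] [DecidableEq Q]
    (π : Equiv.Perm Q) (h : ∀ m : ℕ, (∃ u, (π ^ m) u = u) → π ^ m = 1) :
    orderOf π ∣ Fintype.card Q := by
  by_cases hπ : π = 1
  · simp [hπ]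
  -- π is fixed-point free
  have hfpf : ∀ u : Q, π u ≠ u := by
    intro u hu
    exact hπ (by simpa using h 1 ⟨u, by simpa using hu⟩)
  have hsupp : π.support = Finset.univ := by
    ext x; simp [Equiv.Perm.mem_support, hfpf x]
  have hsum : π.cycleType.sum = Fintype.card Q := by
    rw [Equiv.Perm.sum_cycleType, hsupp, Finset.card_univ]
  set D := orderOf π with hD
  -- every element of the cycle type equals D
  have hall : ∀ r ∈ π.cycleType, r = D := by
    intro r hr
    have hdvd : r ∣ D := by
      rw [hD, ← Equiv.Perm.lcm_cycleType]
      exact Multiset.dvd_lcm hr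
    -- get the cycle c with support card r
    rw [Equiv.Perm.cycleType_def, Multiset.mem_map] at hr
    obtain ⟨c, hc, hcard⟩ := hr
    have hc' := c
    have hcmem : c ∈ π.cycleFactorsFinset := hc
    have hcyc : c.IsCycle := (Equiv.Perm.mem_cycleFactorsFinset_iff.mp hcmem).1
    have hcyc2 := hcyc
    obtain ⟨u, hu⟩ := hcyc2
    have husupp : u ∈ c.support := by
      simp [Equiv.Perm.mem_support, hu.1]
    have hcof : c = π.cycleOf u := Equiv.Perm.cycle_is_cycleOf husupp hcmem
    have horder : orderOf c = r := by rw [Equiv.Perm.IsCycle.orderOf hcyc]; exact hcard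
    -- π ^ r fixes u
    have hfix : (π ^ r) u = u := by
      rw [← Equiv.Perm.cycleOf_pow_apply_self π u r, ← hcof, ← horder, pow_orderOf_eq_one,
        Equiv.Perm.one_apply]
    have : π ^ r = 1 := h r ⟨u, hfix⟩
    have hDr : D ∣ r := orderOf_dvd_of_pow_eq_one this
    exact Nat.dvd_antisymm hdvd hDr
  have hrep : π.cycleType = Multiset.replicate (Multiset.card π.cycleType) D :=
    Multiset.eq_replicate_of_mem hall
  rw [hrep, Multiset.sum_replicate, smul_eq_mul] at hsum
  exact ⟨Multiset.card π.cycleType, by rw [← hsum]; ring⟩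

section Master

variable {Q : Type*} [Fintype Q] [DecidableEq Q]

theorem autotopism_orderOf_dvd
    (mul : Q → Q → Q)
    (hleft : ∀ u : Q, Function.Bijective (mul u))
    (hright : ∀ u : Q, Function.Bijective fun y : Q => mul y u)
    (α β γ : Equiv.Perm Q)
    (hatp : ∀ x y : Q, mul (α x) (β y) = γ (mul x y))
    (hbig : Fintype.card Q < 2 * (Finset.univ.filter fun x : Q => α x = x).card) :
    orderOf α ∣ Fintype.card Q := by
  set n := Fintype.card Q with hn
  set F := (Finset.univ.filter fun x : Q => α x = x) with hF
  have rcancel : ∀ (y a b : Q), mul a y = mul b y → a = b := fun y a b h => (hright y).1 h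
  have lcancel : ∀ (x u v : Q), mul x u = mul x v → u = v := fun x u v h => (hleft x).1 h
  -- iterated autotopism identity
  have hatp_pow : ∀ (m : ℕ) (x y : Q), mul ((α ^ m) x) ((β ^ m) y) = (γ ^ m) (mul x y) := by
    intro m
    induction m with
    | zero => intro x y; simp
    | succ m ih =>
      intro x y
      rw [pow_succ' α, pow_succ' β, pow_succ' γ, Equiv.Perm.mul_apply, Equiv.Perm.mul_apply,
        Equiv.Perm.mul_apply, hatp, ih]
  -- the identity in fixed rows, iterated
  have rowfix : ∀ x ∈ F, ∀ (m : ℕ) (y : Q), (γ ^ m) (mul x y) = mul x ((β ^ m) y) := by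
    intro x hx m y
    have hax : α x = x := by simpa [hF] using hx
    have haxm : (α ^ m) x = x := by
      induction m with
      | zero => simp
      | succ m ih => rw [pow_succ' α, Equiv.Perm.mul_apply, ih, hax]
    rw [← hatp_pow m x y, haxm]
  have hcardF : n < 2 * F.card := hbig
  -- two rows of F meeting: for all u v there exist x x' ∈ F with x*u = x'*v
  have meet1 : ∀ u v : Q, ∃ x ∈ F, ∃ x' ∈ F, mul x u = mul x' v := by
    intro u v
    have hA : (F.image fun x => mul x u).card = F.card :=
      Finset.card_image_of_injOn fun a _ b _ h => rcancel u a b h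
    have hB : (F.image fun x => mul x v).card = F.card :=
      Finset.card_image_of_injOn fun a _ b _ h => rcancel v a b h
    have hnd : ¬Disjoint (F.image fun x => mul x u) (F.image fun x => mul x v) := by
      intro hd
      have := Finset.card_union_of_disjoint hd
      have hle : ((F.image fun x => mul x u) ∪ (F.image fun x => mul x v)).card ≤ n := by
        simpa [hn] using Finset.card_le_univ ((F.image fun x => mul x u) ∪ (F.image fun x => mul x v))
      omega
    obtain ⟨z, hz⟩ := Finset.not_disjoint_iff.mp hnd
    obtain ⟨hz1, hz2⟩ := hz
    obtain ⟨x, hx, hxz⟩ := Finset.mem_image.mp hz1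
    obtain ⟨x', hx', hxz'⟩ := Finset.mem_image.mp hz2
    exact ⟨x, hx, x', hx', by rw [hxz, hxz']⟩
  -- two rows of F through two symbols sharing a column
  have meet2 : ∀ w w' : Q, ∃ x ∈ F, ∃ x' ∈ F, ∃ t : Q, mul x t = w ∧ mul x' t = w' := by
    intro w w'
    -- left division
    have ld : ∀ x w : Q, ∃ t, mul x t = w := fun x w => (hleft x).2 w
    choose ldiv hldiv using ld
    have hA : (F.image fun x => ldiv x w).card = F.card := by
      apply Finset.card_image_of_injOn
      intro a _ b _ h
      simp only at h
      apply rcancel (ldiv a w)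
      rw [hldiv a w, h, hldiv b w]
    have hB : (F.image fun x => ldiv x w').card = F.card := by
      apply Finset.card_image_of_injOn
      intro a _ b _ h
      simp only at h
      apply rcancel (ldiv a w')
      rw [hldiv a w', h, hldiv b w']
    have hnd : ¬Disjoint (F.image fun x => ldiv x w) (F.image fun x => ldiv x w') := by
      intro hd
      have := Finset.card_union_of_disjoint hd
      have hle : ((F.image fun x => ldiv x w) ∪ (F.image fun x => ldiv x w')).card ≤ n := by
        simpa [hn] using Finset.card_le_univ ((F.image fun x => ldiv x w) ∪ (F.image fun x => ldiv x w'))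
      omega
    obtain ⟨t, ht⟩ := Finset.not_disjoint_iff.mp hnd
    obtain ⟨ht1, ht2⟩ := ht
    obtain ⟨x, hx, hxt⟩ := Finset.mem_image.mp ht1
    obtain ⟨x', hx', hxt'⟩ := Finset.mem_image.mp ht2
    refine ⟨x, hx, x', hx', t, ?_, ?_⟩
    · rw [← hxt, hldiv]
    · rw [← hxt', hldiv]
  -- powers of β with a fixed point are trivial
  have betafix : ∀ m : ℕ, (∃ u, (β ^ m) u = u) → β ^ m = 1 := by
    intro m ⟨u, hu⟩
    ext v
    obtain ⟨x, hx, x', hx', hmeet⟩ := meet1 u v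
    have h1 : (γ ^ m) (mul x u) = mul x u := by
      rw [rowfix x hx m u, hu]
    rw [hmeet] at h1
    have h2 := rowfix x' hx' m v
    rw [h1] at h2
    have := lcancel x' _ _ h2.symm
    simpa using this
  -- powers of γ with a fixed point are trivial
  have gammafix : ∀ m : ℕ, (∃ w, (γ ^ m) w = w) → γ ^ m = 1 := by
    intro m ⟨w, hw⟩
    ext w'
    obtain ⟨x, hx, x', hx', t, hxt, hxt'⟩ := meet2 w w'
    have h1 : (β ^ m) t = t := by
      have h0 := rowfix x hx m t
      rw [hxt, hw] at h0
      exact lcancel x _ _ (h0.symm.trans hxt.symm)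
    have h2 := rowfix x' hx' m t
    rw [hxt', h1] at h2
    simpa using h2.trans hxt'
  have hβ : β ^ n = 1 := by
    have := semiregular_orderOf_dvd_card β betafix
    rw [← hn] at this
    exact orderOf_dvd_iff_pow_eq_one.mp this
  have hγ : γ ^ n = 1 := by
    have := semiregular_orderOf_dvd_card γ gammafix
    rw [← hn] at this
    exact orderOf_dvd_iff_pow_eq_one.mp this
  have hα : α ^ n = 1 := by
    ext v
    have := hatp_pow n v v
    rw [hβ, hγ] at this
    simp only [Equiv.Perm.one_apply] at this
    have := rcancel v _ _ this
    simpa using this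
  exact orderOf_dvd_iff_pow_eq_one.mpr hα

end Master

theorem exists_good_order (n : ℕ) (hn : 7 ≤ n) :
    ∃ k : ℕ, 2 ≤ k ∧ ¬k ∣ n ∧ ((Odd k ∧ 2 * k < n) ∨ (Even k ∧ 2 * (k + 2) < n)) := by
  by_cases h3 : (3 : ℕ) ∣ n
  · have hex : ∃ j : ℕ, 2 ≤ j ∧ ¬j ∣ n := by
      refine ⟨n + 1, by omega, fun hd => ?_⟩
      have := Nat.le_of_dvd (by omega) hd
      omega
    set k := Nat.find hex with hk
    obtain ⟨hk2, hknd⟩ := Nat.find_spec hex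
    have hmin : ∀ j, 2 ≤ j → j < k → j ∣ n := by
      intro j hj2 hjk
      by_contra hnd
      exact Nat.find_min hex hjk ⟨hj2, hnd⟩
    rw [← hk] at hk2 hknd
    clear_value k
    have hk3 : k ≠ 3 := fun h => hknd (h ▸ h3)
    refine ⟨k, hk2, hknd, ?_⟩
    rcases Nat.lt_or_ge k 5 with hk5 | hk5
    · interval_cases k
      · right
        exact ⟨even_two, by omega⟩
      · exact absurd rfl hk3
      · right
        have h2 : (2 : ℕ) ∣ n := hmin 2 le_rfl (by omega)
        exact ⟨by decide, by omega⟩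
    · obtain ⟨a, rfl⟩ : ∃ a, k = a + 5 := ⟨k - 5, by omega⟩
      have h1 : (a + 4) ∣ n := hmin (a + 4) (by omega) (by omega)
      have h2 : (a + 3) ∣ n := hmin (a + 3) (by omega) (by omega)
      have hcop : Nat.Coprime (a + 4) (a + 3) := by
        have h14 : a + 4 = 1 + (a + 3) := by omega
        rw [h14, Nat.coprime_add_self_left]
        exact Nat.coprime_one_left _
      have hprod : (a + 4) * (a + 3) ∣ n := Nat.Coprime.mul_dvd_of_dvd_of_dvd hcop h1 h2
      have hle : (a + 4) * (a + 3) ≤ n := Nat.le_of_dvd (by omega) hprod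
      rcases Nat.even_or_odd (a + 5) with hke | hko
      · right
        refine ⟨hke, ?_⟩
        have ha1 : 1 ≤ a := by
          by_contra h
          have : a = 0 := by omega
          rw [this] at hke
          exact (Nat.not_even_iff_odd.mpr (by decide)) hke
        nlinarith
      · left
        refine ⟨hko, ?_⟩
        nlinarith
  · exact ⟨3, by omega, h3, Or.inl ⟨by decide, by omega⟩⟩

theorem exists_good_perm {Q : Type*} [Fintype Q] [DecidableEq Q] (k : ℕ) (hk2 : 2 ≤ k)
    (hcase : (Odd k ∧ 2 * k < Fintype.card Q) ∨ (Even k ∧ 2 * (k + 2) < Fintype.card Q)) :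
    ∃ α : Equiv.Perm Q, Equiv.Perm.sign α = 1 ∧ orderOf α = k ∧
      Fintype.card Q < 2 * (Finset.univ.filter fun x : Q => α x = x).card := by
  have fixcard : ∀ σ : Equiv.Perm Q,
      (Finset.univ.filter fun x : Q => σ x = x).card = Fintype.card Q - σ.support.card := by
    intro σ
    have : (Finset.univ.filter fun x : Q => σ x = x) = σ.supportᶜ := by
      ext x
      simp [Equiv.Perm.mem_support, not_not]
    rw [this, Finset.card_compl]
  rcases hcase with ⟨hodd, hlt⟩ | ⟨heven, hlt⟩
  · -- single k-cycle
    obtain ⟨e⟩ : Nonempty (Fin k ↪ Q) :=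
      Function.Embedding.nonempty_of_card_le (by simp; omega)
    set l : List Q := (List.finRange k).map e with hl
    have hnodup : l.Nodup := (List.nodup_finRange k).map e.injective
    have hlen : l.length = k := by simp [hl]
    have hne : ∀ x : Q, l ≠ [x] := by
      intro x h
      apply_fun List.length at h
      simp [hlen] at h
      omega
    set α := l.formPerm with hα
    have hsupp : α.support = l.toFinset := List.support_formPerm_of_nodup l hnodup hne
    have hsuppcard : α.support.card = k := by
      rw [hsupp, List.toFinset_card_of_nodup hnodup, hlen]
    have hcyc : α.IsCycle := List.isCycle_formPerm hnodup (by omega)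
    refine ⟨α, ?_, ?_, ?_⟩
    · rw [hcyc.sign, hsuppcard, Odd.neg_one_pow hodd]
      simp
    · rw [hcyc.orderOf, hsuppcard]
    · rw [fixcard, hsuppcard]
      omega
  · -- swap * k-cycle
    obtain ⟨e⟩ : Nonempty (Fin (k + 2) ↪ Q) :=
      Function.Embedding.nonempty_of_card_le (by simp; omega)
    set a := e ⟨0, by omega⟩ with ha
    set b := e ⟨1, by omega⟩ with hb
    have hab : a ≠ b := by
      intro h
      have := e.injective h
      simp [Fin.ext_iff] at this
    set g : Fin k → Q := fun j => e ⟨j.1 + 2, by omega⟩ with hg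
    have hginj : Function.Injective g := by
      intro j j' h
      have := e.injective h
      simp [Fin.ext_iff] at this
      exact Fin.ext this
    set l : List Q := (List.finRange k).map g with hl
    have hnodup : l.Nodup := (List.nodup_finRange k).map hginj
    have hlen : l.length = k := by simp [hl]
    have hne : ∀ x : Q, l ≠ [x] := by
      intro x h
      apply_fun List.length at h
      simp [hlen] at h
      omega
    set τ := l.formPerm with hτ
    have hsuppτ : τ.support = l.toFinset := List.support_formPerm_of_nodup l hnodup hne
    have hsuppτcard : τ.support.card = k := by
      rw [hsuppτ, List.toFinset_card_of_nodup hnodup, hlen]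
    have hcycτ : τ.IsCycle := List.isCycle_formPerm hnodup (by omega)
    set σ := Equiv.swap a b with hσ
    have hsuppσ : σ.support = {a, b} := Equiv.Perm.support_swap hab
    have hsuppσcard : σ.support.card = 2 := by
      rw [hsuppσ]
      rw [Finset.card_insert_of_notMem (by simp [hab]), Finset.card_singleton]
    have hcycσ : σ.IsCycle := Equiv.Perm.isCycle_swap hab
    -- a, b are not in the support of τ
    have hnotmem : ∀ x ∈ ({a, b} : Finset Q), x ∉ l.toFinset := by
      intro x hx hxl
      rw [List.mem_toFinset, hl, List.mem_map] at hxl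
      obtain ⟨j, _, hj⟩ := hxl
      rcases Finset.mem_insert.mp hx with h | h
      · rw [ha] at h
        have := e.injective (hj.trans h)
        simp [hg, Fin.ext_iff] at this
      · rw [Finset.mem_singleton, hb] at h
        have := e.injective (hj.trans h)
        simp [hg, Fin.ext_iff] at this
    have hdisj : σ.Disjoint τ := by
      rw [Equiv.Perm.disjoint_iff_disjoint_support, hsuppσ, hsuppτ]
      rw [Finset.disjoint_left]
      exact fun {x} hx => hnotmem x hx
    set α := σ * τ with hαdef
    have hordσ : orderOf σ = 2 := by rw [hcycσ.orderOf, hsuppσcard]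
    have hordτ : orderOf τ = k := by rw [hcycτ.orderOf, hsuppτcard]
    have hord : orderOf α = k := by
      rw [hαdef, hdisj.orderOf, hordσ, hordτ]
      apply Nat.dvd_antisymm
      · exact Nat.lcm_dvd (even_iff_two_dvd.mp heven) dvd_rfl
      · exact Nat.dvd_lcm_right 2 k
    have hsuppα : α.support.card = k + 2 := by
      rw [hαdef, hdisj.card_support_mul, hsuppσcard, hsuppτcard]
      omega
    refine ⟨α, ?_, hord, ?_⟩
    · rw [hαdef, map_mul, Equiv.Perm.sign_swap hab, hcycτ.sign, hsuppτcard,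
        Even.neg_one_pow heven]
      simp
    · rw [fixcard, hsuppα]
      omega

/-- The projection of the autotopism group of a quasigroup `(Q, mul)` onto its `i`-th
coordinate, as a set of permutations of `Q`. -/
def AtpProjQ {Q : Type*} (mul : Q → Q → Q) (i : Fin 3) : Set (Equiv.Perm Q) :=
  {δ | ∃ α β γ : Equiv.Perm Q, (∀ x y : Q, mul (α x) (β y) = γ (mul x y)) ∧ δ = ![α, β, γ] i}

theorem proj1_eq {Q : Type*} (mul : Q → Q → Q) :
    AtpProjQ mul 1 = AtpProjQ (fun x y => mul y x) 0 := by
  ext δ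
  constructor
  · rintro ⟨α, β, γ, hatp, h⟩
    exact ⟨β, α, γ, fun x y => hatp y x, by rw [h]; simp⟩
  · rintro ⟨β, α, γ, hatp, h⟩
    exact ⟨α, β, γ, fun x y => hatp y x, by rw [h]; simp⟩

theorem proj2_eq {Q : Type*} [Fintype Q] [DecidableEq Q] (mul : Q → Q → Q)
    (hright : ∀ u : Q, Function.Bijective fun y : Q => mul y u) :
    AtpProjQ mul 2 =
      AtpProjQ (fun w y => (Equiv.ofBijective _ (hright y)).symm w) 0 := by
  have hrd : ∀ (w y x : Q), (Equiv.ofBijective _ (hright y)).symm w = x ↔ mul x y = w := by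
    intro w y x
    rw [Equiv.symm_apply_eq]
    constructor
    · intro h; rw [h]; rfl
    · intro h; rw [← h]; rfl
  ext δ
  constructor
  · rintro ⟨α, β, γ, hatp, h⟩
    refine ⟨γ, β, α, ?_, by rw [h]; simp⟩
    intro w y
    simp only
    rw [hrd]
    rw [hatp]
    congr 1
    exact ((hrd w y _).mp rfl)
  · rintro ⟨A, B, C, h, hδ⟩
    refine ⟨C, B, A, ?_, by rw [hδ]; simp⟩
    intro x y
    have hw : (Equiv.ofBijective _ (hright y)).symm (mul x y) = x := (hrd _ y x).mpr rfl
    have h2 := h (mul x y) y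
    simp only at h2
    rw [hw] at h2
    exact ((hrd _ (B y) (C x)).mp h2)

theorem core_not {Q : Type*} [Fintype Q] [DecidableEq Q] (hn : 7 ≤ Fintype.card Q)
    (mul : Q → Q → Q)
    (hleft : ∀ u : Q, Function.Bijective (mul u))
    (hright : ∀ u : Q, Function.Bijective fun y : Q => mul y u) :
    AtpProjQ mul 0 ≠ Set.univ ∧
      AtpProjQ mul 0 ≠ (alternatingGroup Q : Set (Equiv.Perm Q)) := by
  have key : ¬((alternatingGroup Q : Set (Equiv.Perm Q)) ⊆ AtpProjQ mul 0) := by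
    intro hsub
    obtain ⟨k, hk2, hknd, hcase⟩ := exists_good_order (Fintype.card Q) hn
    obtain ⟨α, hsign, hord, hfix⟩ := exists_good_perm k hk2 hcase
    have hmem : α ∈ AtpProjQ mul 0 := by
      apply hsub
      rw [SetLike.mem_coe, Equiv.Perm.mem_alternatingGroup]
      exact hsign
    obtain ⟨α', β, γ, hatp, heq⟩ := hmem
    have hαα : α = α' := by simpa using heq
    rw [hαα] at hord hfix
    exact hknd (hord ▸ autotopism_orderOf_dvd mul hleft hright α' β γ hatp hfix)
  constructor
  · intro h
    apply key
    rw [h]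
    exact Set.subset_univ _
  · intro h
    rw [h] at key
    exact key subset_rfl

/-- Lemma 5.3: for a quasigroup `Q` of order `n ≥ 7` and `i ∈ {1,2,3}`, the projection
`Atp_i(Q)` is neither the full symmetric group on `Q` nor the alternating group on `Q`. -/
theorem atp_proj_not_sym_not_alt
    {Q : Type*} [Fintype Q] [DecidableEq Q] (hn : 7 ≤ Fintype.card Q)
    (mul : Q → Q → Q)
    (hleft : ∀ u : Q, Function.Bijective (mul u))
    (hright : ∀ u : Q, Function.Bijective fun y : Q => mul y u)
    (i : Fin 3) :
    AtpProjQ mul i ≠ Set.univ ∧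
      AtpProjQ mul i ≠ (alternatingGroup Q : Set (Equiv.Perm Q)) := by
  fin_cases i
  · exact core_not hn mul hleft hright
  · rw [show (⟨1, by omega⟩ : Fin 3) = (1 : Fin 3) from rfl, proj1_eq]
    exact core_not hn _ (fun u => hright u) (fun u => hleft u)
  · rw [show (⟨2, by omega⟩ : Fin 3) = (2 : Fin 3) from rfl, proj2_eq mul hright]
    refine core_not hn _ ?_ ?_
    · intro u
      rw [Finite.injective_iff_bijective.symm]
      intro y y' hyy
      simp only at hyy
      have h1 : mul ((Equiv.ofBijective _ (hright y)).symm u) y = u :=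
        (Equiv.ofBijective _ (hright y)).apply_symm_apply u
      have h2 : mul ((Equiv.ofBijective _ (hright y')).symm u) y' = u :=
        (Equiv.ofBijective _ (hright y')).apply_symm_apply u
      rw [hyy] at h1
      exact (hleft _).1 (h1.trans h2.symm)
    · intro y
      exact (Equiv.ofBijective _ (hright y)).symm.bijective
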